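/- Let Z and X be finite-dimensional real normed vector spaces, K ⊆ Z a closed, convex and pointed cone, m* ∈ Z*, and L ∈ B(Z,X). Then the following are equivalent: (i) there exists p* ∈ X* such that p*(L(z)) − m*(z) < 0 for all nonzero z ∈ K; (ii) m*(z0) > 0 for every nonzero z0 ∈ K such that L(z0) = 0. -/

import Mathlib

/-- Auxiliary reindexing lemma: a sum over `Fin n` of a function supported on indices `< k`
equals the corresponding sum over `Fin k`. -/
theorem reindex_sum_aux {M : Type*} [AddCommMonoid M] {k n : ℕ} (hk : k ≤ n) (g : Fin k → M) :
    (∑ i : Fin n, if h : (i : ℕ) < k then g ⟨i, h⟩ else 0) = ∑ j : Fin k, g j := by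
  set F : ℕ → M := fun m => if h : m < k then g ⟨m, h⟩ else 0 with hF
  have h1 : (∑ i : Fin n, if h : (i : ℕ) < k then g ⟨i, h⟩ else 0)
      = ∑ m ∈ Finset.range n, F m := by
    rw [← Fin.sum_univ_eq_sum_range]
  have h2 : ∑ m ∈ Finset.range n, F m = ∑ m ∈ Finset.range k, F m := by
    refine (Finset.sum_subset (Finset.range_subset_range.2 hk) ?_).symm
    intro m _ hm
    rw [Finset.mem_range] at hm
    exact dif_neg hm
  have h3 : ∑ m ∈ Finset.range k, F m = ∑ j : Fin k, g j := by
    rw [← Fin.sum_univ_eq_sum_range]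
    refine Finset.sum_congr rfl fun i _ => ?_
    simp [hF, i.isLt]
  rw [h1, h2, h3]

/-- Convex hull of a compact set in a finite-dimensional normed space is compact. -/
theorem isCompact_convexHull_of_isCompact {E : Type*} [NormedAddCommGroup E] [NormedSpace ℝ E]
    [FiniteDimensional ℝ E] {s : Set E} (hs : IsCompact s) : IsCompact (convexHull ℝ s) := by
  rcases s.eq_empty_or_nonempty with h | ⟨z0, hz0⟩
  · simp [h]
  set n := Module.finrank ℝ E + 1 with hn
  set A : Set ((Fin n → ℝ) × (Fin n → E)) :=
    (stdSimplex ℝ (Fin n)) ×ˢ (Set.pi Set.univ fun _ => s) with hA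
  have hAcomp : IsCompact A :=
    (isCompact_stdSimplex ℝ _).prod (isCompact_univ_pi fun _ => hs)
  set f : (Fin n → ℝ) × (Fin n → E) → E := fun p => ∑ i, p.1 i • p.2 i with hf
  have hfc : Continuous f := by
    apply continuous_finset_sum
    intro i _
    exact ((continuous_apply i).comp continuous_fst).smul
      ((continuous_apply i).comp continuous_snd)
  have himg : f '' A = convexHull ℝ s := by
    apply Set.Subset.antisymm
    · rintro _ ⟨⟨w, z⟩, ⟨hwmem, hzmem⟩, rfl⟩
      exact (convex_convexHull ℝ s).sum_mem (fun i _ => hwmem.1 i) hwmem.2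
        (fun i _ => subset_convexHull ℝ s (hzmem i (Set.mem_univ i)))
    · intro x hx
      obtain ⟨ι, hfin, z, w, hzs, hai, hwpos, hw1, hsum⟩ :=
        eq_pos_convex_span_of_mem_convexHull hx
      have hne : Nonempty ι := by
        by_contra hni
        haveI : IsEmpty ι := not_nonempty_iff.mp hni
        simp at hw1
      set k := Fintype.card ι with hkdef
      have hk : k ≤ n := by
        have h1 : Module.finrank ℝ (vectorSpan ℝ (Set.range z)) + 1 = k :=
          hai.finrank_vectorSpan_add_one
        have h2 : Module.finrank ℝ (vectorSpan ℝ (Set.range z)) ≤ Module.finrank ℝ E :=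
          Submodule.finrank_le _
        linarith
      set e := (Fintype.equivFin ι).symm with he
      set w' : Fin n → ℝ := fun i => if h : (i : ℕ) < k then w (e ⟨i, h⟩) else 0 with hw'
      set z' : Fin n → E := fun i => if h : (i : ℕ) < k then z (e ⟨i, h⟩) else z0 with hz'
      refine ⟨(w', z'), ⟨⟨fun i => ?_, ?_⟩, fun i _ => ?_⟩, ?_⟩
      · by_cases h : (i : ℕ) < k
        · simp only [hw', dif_pos h]; exact (hwpos _).le
        · simp [hw', dif_neg h]
      · show ∑ i : Fin n, w' i = 1
        rw [hw']
        rw [reindex_sum_aux hk fun j => w (e j), Equiv.sum_comp e w, hw1]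
      · by_cases h : (i : ℕ) < k
        · simp only [hz', dif_pos h]; exact hzs (Set.mem_range_self _)
        · simp only [hz', dif_neg h]; exact hz0
      · show ∑ i : Fin n, w' i • z' i = x
        have hterm : ∀ i : Fin n, w' i • z' i
            = (if h : (i : ℕ) < k then (fun j : Fin k => w (e j) • z (e j)) ⟨i, h⟩ else 0) := by
          intro i
          by_cases h : (i : ℕ) < k
          · simp [hw', hz', dif_pos h]
          · simp [hw', hz', dif_neg h]
        rw [Finset.sum_congr rfl fun i _ => hterm i,
          reindex_sum_aux hk fun j : Fin k => w (e j) • z (e j),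
          Equiv.sum_comp e fun j => w j • z j, hsum]
  rw [← himg]
  exact hAcomp.image hfc

/-- Theorem: strict separation. Let `Z, X` be finite-dimensional real
normed spaces, `K ⊆ Z` a closed, convex, pointed cone, `m* ∈ Z*` and `L ∈ B(Z,X)`.
Then there exists `p* ∈ X*` with `p*(L z) - m*(z) < 0` for all nonzero `z ∈ K` if and
only if `m*(z0) > 0` for every nonzero `z0 ∈ K` with `L z0 = 0`. -/
theorem exists_functional_strict_conic_ineq_iff_pos_on_kernel
    {Z X : Type*} [NormedAddCommGroup Z] [NormedSpace ℝ Z] [FiniteDimensional ℝ Z]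
    [NormedAddCommGroup X] [NormedSpace ℝ X] [FiniteDimensional ℝ X]
    (K : Set Z) (hKcone : ∀ z ∈ K, ∀ α : ℝ, 0 ≤ α → α • z ∈ K) (hKconv : Convex ℝ K)
    (hKclosed : IsClosed K) (hKpointed : ∀ z ∈ K, -z ∈ K → z = 0)
    (mstar : Z →L[ℝ] ℝ) (L : Z →L[ℝ] X) :
    (∃ pstar : X →L[ℝ] ℝ, ∀ z ∈ K, z ≠ 0 → pstar (L z) - mstar z < 0) ↔
      (∀ z0 ∈ K, z0 ≠ 0 → L z0 = 0 → 0 < mstar z0) := by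
  classical
  constructor
  · rintro ⟨p, hp⟩ z0 hz0K hz0ne hLz0
    have h := hp z0 hz0K hz0ne
    rw [hLz0, map_zero] at h
    linarith
  · intro hker
    set S : Set Z := K ∩ Metric.sphere (0 : Z) 1 with hSdef
    suffices h : ∃ p : X →L[ℝ] ℝ, ∀ w ∈ S, p (L w) - mstar w < 0 by
      obtain ⟨p, hp⟩ := h
      refine ⟨p, fun z hzK hzne => ?_⟩
      have hnz : (0 : ℝ) < ‖z‖ := norm_pos_iff.2 hzne
      set w : Z := ‖z‖⁻¹ • z with hwdef
      have hwK : w ∈ K := hKcone z hzK _ (inv_nonneg.2 hnz.le)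
      have hwS : w ∈ S := by
        refine ⟨hwK, ?_⟩
        rw [mem_sphere_zero_iff_norm, hwdef, norm_smul, norm_inv, norm_norm,
          inv_mul_cancel₀ hnz.ne']
      have h1 := hp w hwS
      have hz : z = ‖z‖ • w := by
        rw [hwdef, smul_smul, mul_inv_cancel₀ hnz.ne', one_smul]
      have hpl : p (L z) = ‖z‖ * p (L w) := by
        conv_lhs => rw [hz]
        rw [map_smul, map_smul, smul_eq_mul]
      have hml : mstar z = ‖z‖ * mstar w := by
        conv_lhs => rw [hz]
        rw [map_smul, smul_eq_mul]
      have hcalc : p (L z) - mstar z = ‖z‖ * (p (L w) - mstar w) := by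
        rw [hpl, hml]; ring
      rw [hcalc]
      exact mul_neg_of_pos_of_neg hnz h1
    have hScomp : IsCompact S := (isCompact_sphere 0 1).inter_left hKclosed
    have hSsubK : S ⊆ K := Set.inter_subset_left
    set T : Set Z := convexHull ℝ S with hTdef
    have hTcomp : IsCompact T := isCompact_convexHull_of_isCompact hScomp
    have hTK : T ⊆ K := convexHull_min hSsubK hKconv
    have hsumK : ∀ {ι : Type} (t : Finset ι) (f : ι → Z), (0 : Z) ∈ K →
        (∀ i ∈ t, f i ∈ K) → ∑ i ∈ t, f i ∈ K := by
      intro ι t f h0 hf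
      refine Finset.sum_induction f (· ∈ K) (fun a b ha hb => ?_) h0 hf
      have hmid : (1 / 2 : ℝ) • a + (1 / 2 : ℝ) • b ∈ K :=
        hKconv ha hb (by norm_num) (by norm_num) (by norm_num)
      have := hKcone _ hmid 2 (by norm_num)
      convert this using 1
      module
    have hT0 : (0 : Z) ∉ T := by
      intro h0
      rw [hTdef, convexHull_eq] at h0
      obtain ⟨ι, t, w, z, hw0, hw1, hzS, hcm⟩ := h0
      rw [Finset.centerMass_eq_of_sum_1 _ _ hw1] at hcm
      have hex : ∃ i ∈ t, 0 < w i := by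
        by_contra hno
        push_neg at hno
        have : ∑ i ∈ t, w i ≤ 0 := Finset.sum_nonpos hno
        linarith
      obtain ⟨i0, hi0t, hi0⟩ := hex
      have h0mem : (0 : Z) ∈ K := by
        simpa using hKcone (z i0) (hzS i0 hi0t).1 0 le_rfl
      have hsum : ∑ j ∈ t.erase i0, w j • z j ∈ K := by
        refine hsumK _ _ h0mem fun j hj => ?_
        exact hKcone (z j) (hzS j (Finset.mem_of_mem_erase hj)).1 (w j)
          (hw0 j (Finset.mem_of_mem_erase hj))
      have heq : w i0 • z i0 + ∑ j ∈ t.erase i0, w j • z j = 0 := by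
        rw [← hcm]
        exact Finset.add_sum_erase t (fun j => w j • z j) hi0t
      have hneg : -(w i0 • z i0) ∈ K := by
        rw [← eq_neg_of_add_eq_zero_right heq]; exact hsum
      have hmem : w i0 • z i0 ∈ K := hKcone _ (hzS i0 hi0t).1 _ (hw0 _ hi0t)
      have hzero := hKpointed _ hmem hneg
      rcases smul_eq_zero.mp hzero with h | h
      · exact hi0.ne' h
      · have : ‖z i0‖ = 1 := mem_sphere_zero_iff_norm.mp (hzS i0 hi0t).2
        rw [h] at this; simp at this
    set g : Z →L[ℝ] X × ℝ := L.prod mstar with hgdef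
    set C : Set (X × ℝ) := g '' T with hCdef
    have hCcomp : IsCompact C := hTcomp.image g.continuous
    have hCconv : Convex ℝ C := by
      have := ((convex_convexHull ℝ S).linear_image (g : Z →ₗ[ℝ] X × ℝ))
      exact this
    set D : Set (X × ℝ) := {(0 : X)} ×ˢ Set.Iic (0 : ℝ) with hDdef
    have hDconv : Convex ℝ D := (convex_singleton _).prod (convex_Iic _)
    have hDclosed : IsClosed D := isClosed_singleton.prod isClosed_Iic
    have hdisj : Disjoint C D := by
      rw [Set.disjoint_left]
      rintro ⟨x, r⟩ ⟨zb, hzbT, hgz⟩ hmem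
      obtain ⟨hx0, hr⟩ := hmem
      simp only [Set.mem_singleton_iff] at hx0
      rw [Set.mem_Iic] at hr
      have h1 : L zb = x := congrArg Prod.fst hgz
      have h2 : mstar zb = r := congrArg Prod.snd hgz
      have hL : L zb = 0 := by rw [h1, hx0]
      have hzbK : zb ∈ K := hTK hzbT
      have hzbne : zb ≠ 0 := fun h => hT0 (h ▸ hzbT)
      have := hker zb hzbK hzbne hL
      rw [h2] at this
      exact absurd hr (not_le.2 this)
    obtain ⟨f, u, v, hfu, huv, hfv⟩ :=
      geometric_hahn_banach_compact_closed hCconv hCcomp hDconv hDclosed hdisj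
    have hv0 : v < 0 := by
      have := hfv ((0 : X), (0 : ℝ)) ⟨rfl, Set.mem_Iic.mpr le_rfl⟩
      have h00 : ((0 : X), (0 : ℝ)) = (0 : X × ℝ) := rfl
      rwa [h00, map_zero] at this
    have hu0 : u < 0 := huv.trans hv0
    set c : ℝ := f (0, 1) with hcdef
    set q : X →L[ℝ] ℝ := f.comp (ContinuousLinearMap.inl ℝ X ℝ) with hqdef
    have hdecomp : ∀ (x : X) (r : ℝ), f (x, r) = q x + r * c := by
      intro x r
      have hx : (x, r) = (x, (0 : ℝ)) + r • ((0 : X), (1 : ℝ)) := by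
        simp [Prod.ext_iff]
      rw [hx, map_add, map_smul]
      simp [hqdef, hcdef, ContinuousLinearMap.inl_apply]
    have hc : c ≤ 0 := by
      by_contra hcpos
      push_neg at hcpos
      have hrle : (v - 1) / c ≤ 0 := by
        apply div_nonpos_of_nonpos_of_nonneg <;> linarith
      have := hfv (0, (v - 1) / c) ⟨rfl, Set.mem_Iic.mpr hrle⟩
      rw [hdecomp, map_zero, zero_add, div_mul_cancel₀ _ hcpos.ne'] at this
      linarith
    have hkey : ∀ w ∈ S, q (L w) + c * mstar w < u := by
      intro w hw
      have hmemC : g w ∈ C := ⟨w, subset_convexHull ℝ S hw, rfl⟩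
      have := hfu (g w) hmemC
      have hgw : g w = (L w, mstar w) := rfl
      rw [hgw, hdecomp] at this
      linarith
    rcases hc.lt_or_eq with hclt | hceq
    · refine ⟨(-c)⁻¹ • q, fun w hw => ?_⟩
      have h1 := hkey w hw
      have hcpos : 0 < -c := neg_pos.2 hclt
      have hcne : c ≠ 0 := hclt.ne
      have hinv2 : c * c⁻¹ = 1 := mul_inv_cancel₀ hcne
      have hrw : ((-c)⁻¹ • q) (L w) - mstar w = (-c)⁻¹ * (q (L w) + c * mstar w) := by
        rw [ContinuousLinearMap.smul_apply, smul_eq_mul, inv_neg]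
        linear_combination (mstar w) * hinv2
      rw [hrw]
      exact mul_neg_of_pos_of_neg (inv_pos.2 hcpos) (h1.trans hu0)
    · -- c = 0
      set M : ℝ := ‖mstar‖ with hMdef
      have hM0 : 0 ≤ M := norm_nonneg _
      set t' : ℝ := (M + 1) / (-u) with ht'def
      have ht'pos : 0 < t' := div_pos (by linarith) (by linarith)
      refine ⟨t' • q, fun w hw => ?_⟩
      have h1 := hkey w hw
      rw [hceq, zero_mul, add_zero] at h1
      have hmw : |mstar w| ≤ M := by
        have hw1 : ‖w‖ = 1 := mem_sphere_zero_iff_norm.mp hw.2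
        calc |mstar w| = ‖mstar w‖ := rfl
          _ ≤ ‖mstar‖ * ‖w‖ := mstar.le_opNorm w
          _ = M := by rw [hw1, mul_one]
      have habs := abs_le.mp hmw
      have h2 : t' * q (L w) < t' * u := mul_lt_mul_of_pos_left h1 ht'pos
      have hune : u ≠ 0 := ne_of_lt hu0
      have h3 : t' * u = -(M + 1) := by
        have huu : u * u⁻¹ = 1 := mul_inv_cancel₀ hune
        rw [ht'def]
        field_simp
      rw [ContinuousLinearMap.smul_apply, smul_eq_mul]
      linarith
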